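/- For every integer d ≥ 4, one has 1/((2.6·d)^{d/2−1}·(d−1)^{ln(d−1)}) + 1/(1.25·(2.6·d)^{d−2}) + d^{1/(d−1)} < (d+1)^{1/(d−1)}, where all powers are real powers. -/

import Mathlib

open Real

set_option maxHeartbeats 1000000 in
theorem stmt_16 (d : ℕ) (hd : 4 ≤ d) :
    1 / ((2.6 * (d : ℝ)) ^ ((d : ℝ) / 2 - 1) * ((d : ℝ) - 1) ^ Real.log ((d : ℝ) - 1)) +
        1 / (1.25 * (2.6 * (d : ℝ)) ^ ((d : ℝ) - 2)) +
        (d : ℝ) ^ ((1 : ℝ) / ((d : ℝ) - 1)) <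
      ((d : ℝ) + 1) ^ ((1 : ℝ) / ((d : ℝ) - 1)) := by
  have hD : (4:ℝ) ≤ (d:ℝ) := by exact_mod_cast hd
  set D : ℝ := (d:ℝ) with hDdef
  have hD0 : (0:ℝ) < D := by linarith
  have hD1 : (1:ℝ) < D := by linarith
  set a : ℝ := 1 / (D - 1) with ha_def
  have hDm1 : (0:ℝ) < D - 1 := by linarith
  have ha0 : 0 < a := by rw [ha_def]; positivity
  have ha1 : a ≤ 1 / 3 := by
    rw [ha_def]
    rw [div_le_div_iff₀ (by linarith) (by norm_num)]
    linarith
  -- Bernoulli step: (1 + 1/D)^(1-a) ≤ 1 + (1-a)*(1/D)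
  have hs' : (-1:ℝ) ≤ 1/D := by
    have : (0:ℝ) ≤ 1/D := by positivity
    linarith
  have hbern : ((1:ℝ) + 1/D) ^ (1 - a) ≤ 1 + (1 - a) * (1/D) :=
    rpow_one_add_le_one_add_mul_self hs' (by linarith) (by linarith)
  have hy0 : (0:ℝ) < 1 + 1/D := by positivity
  have hsplit : ((1:ℝ) + 1/D) ^ a * ((1:ℝ) + 1/D) ^ (1 - a) = 1 + 1/D := by
    rw [← Real.rpow_add hy0]
    simp
  -- key rational inequality
  have hkey : (1 + a / (D + 1)) * (1 + (1 - a) * (1/D)) ≤ 1 + 1/D := by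
    have h2 : D ≠ 0 := by linarith
    have h3 : D + 1 ≠ 0 := by linarith
    have hdiff : (1 + 1/D) - (1 + a / (D + 1)) * (1 + (1 - a) * (1/D))
        = a^2 / (D * (D + 1)) := by
      field_simp
      ring
    have hnn : (0:ℝ) ≤ a^2 / (D * (D + 1)) := by positivity
    linarith
  have hyp : (0:ℝ) < ((1:ℝ) + 1/D) ^ (1 - a) := rpow_pos_of_pos hy0 _
  have hay : 1 + a / (D + 1) ≤ ((1:ℝ) + 1/D) ^ a := by
    rw [← mul_le_mul_iff_left₀ hyp, hsplit]
    calc (1 + a / (D + 1)) * ((1:ℝ) + 1/D) ^ (1 - a)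
        ≤ (1 + a / (D + 1)) * (1 + (1 - a) * (1/D)) := by
          apply mul_le_mul_of_nonneg_left hbern
          have : (0:ℝ) ≤ a / (D + 1) := div_nonneg ha0.le (by linarith)
          linarith
      _ ≤ 1 + 1/D := hkey
  -- gap bound
  have hDa1 : (1:ℝ) ≤ D ^ a := Real.one_le_rpow hD1.le ha0.le
  have hgap : D ^ a + 1 / (D^2 - 1) ≤ (D + 1) ^ a := by
    have h1 : (D + 1) ^ a = D ^ a * ((1:ℝ) + 1/D) ^ a := by
      rw [← Real.mul_rpow hD0.le hy0.le]
      congr 1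
      field_simp
    rw [h1]
    have h2 : D ^ a * (1 + a / (D + 1)) ≤ D ^ a * ((1:ℝ) + 1/D) ^ a :=
      mul_le_mul_of_nonneg_left hay (Real.rpow_nonneg hD0.le a)
    have h3 : a / (D + 1) = 1 / (D^2 - 1) := by
      rw [ha_def]
      rw [div_div]
      congr 1
      ring
    nlinarith [mul_nonneg (sub_nonneg.mpr hDa1)
      (div_nonneg zero_le_one (show (0:ℝ) ≤ D^2 - 1 by nlinarith))]
  -- term A bound
  have hbase1 : (1:ℝ) ≤ 2.6 * D := by linarith
  have hA : 2.6 * D ≤ (2.6 * D) ^ (D / 2 - 1) := by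
    calc 2.6 * D = (2.6 * D) ^ (1:ℝ) := (rpow_one _).symm
      _ ≤ (2.6 * D) ^ (D / 2 - 1) :=
        rpow_le_rpow_of_exponent_le hbase1 (by linarith)
  have hlog1 : (1:ℝ) ≤ Real.log (D - 1) := by
    rw [Real.le_log_iff_exp_le (by linarith)]
    have := Real.exp_one_lt_d9
    linarith
  have hB : D - 1 ≤ (D - 1) ^ Real.log (D - 1) := by
    calc D - 1 = (D - 1) ^ (1:ℝ) := (rpow_one _).symm
      _ ≤ (D - 1) ^ Real.log (D - 1) :=
        rpow_le_rpow_of_exponent_le (by linarith) hlog1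
  have hC : (2.6 * D) ^ (2:ℝ) ≤ (2.6 * D) ^ (D - 2) :=
    rpow_le_rpow_of_exponent_le hbase1 (by linarith)
  have hC2 : (2.6 * D) ^ (2:ℝ) = (2.6 * D) ^ 2 := by
    rw [← Real.rpow_natCast (2.6 * D) 2]; norm_num
  -- positivity facts
  have hApos : (0:ℝ) < (2.6 * D) ^ (D / 2 - 1) := rpow_pos_of_pos (by linarith) _
  have hBpos : (0:ℝ) < (D - 1) ^ Real.log (D - 1) := rpow_pos_of_pos (by linarith) _
  have hCpos : (0:ℝ) < (2.6 * D) ^ (D - 2) := rpow_pos_of_pos (by linarith) _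
  have hT1 : 1 / ((2.6 * D) ^ (D / 2 - 1) * (D - 1) ^ Real.log (D - 1))
      ≤ (2/3) / (D^2 - 1) := by
    rw [div_le_div_iff₀ (by positivity) (by nlinarith)]
    have hP : (2.6 * D) * (D - 1) ≤ (2.6 * D) ^ (D / 2 - 1) * (D - 1) ^ Real.log (D - 1) :=
      mul_le_mul hA hB (by linarith) hApos.le
    have h4 : D^2 - 1 ≤ 2/3 * (2.6 * D * (D - 1)) := by nlinarith
    linarith
  have hT2 : 1 / (1.25 * (2.6 * D) ^ (D - 2)) < (1/3) / (D^2 - 1) := by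
    rw [div_lt_div_iff₀ (by positivity) (by nlinarith)]
    have h26 : (2.6 * D) ^ 2 ≤ (2.6 * D) ^ (D - 2) := by
      rw [← hC2]; exact hC
    have h5 : D^2 - 1 < 1/3 * (1.25 * (2.6 * D)^2) := by nlinarith
    linarith
  have hsum : (2:ℝ)/3/(D^2-1) + 1/3/(D^2-1) = 1/(D^2-1) := by ring
  linarith [hgap, hT1, hT2, hsum]
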